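/- Given a SHACL document M, a graph G, an assignment σ and a node n, the following hold for every SHACL constraint d occurring in M: (i) the three-valued evaluation of d at n under G,σ is True iff the Boolean evaluation of γ(d) at n under G,σ^γ is True; (ii) the three-valued evaluation of d at n under G,σ is False iff the Boolean evaluation of γ(¬d) at n under G,σ^γ is True; (iii) the three-valued evaluation of d at n under G,σ is Undefined iff both the evaluations of γ(d) and of γ(¬d) at n under G,σ^γ are False. -/
import Mathlib


/-!
STATEMENT 3.  The γ transformation (replacing positive shape-reference atoms
`s(x)` by `s⁺(x) ∧ ¬s⁻(x)` and negated ones `¬s(x)` by `¬s⁺(x) ∧ s⁻(x)`)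
together with the total assignment `σ^γ` turns three-valued evaluation of a
constraint into Boolean evaluation of `γ(d)` and `γ(¬d)`.
-/

namespace SHACL

/-- RDF nodes: a single infinite domain of RDF terms. -/
abbrev Node := ℕ

/-- Shape names. -/
abbrev SName := ℕ

/-- An RDF graph: a set of (subject, predicate, object) triples. -/
abbrev Graph := Set (Node × Node × Node)

/-- Kleene's three truth values. -/
inductive K3 | t | f | u
deriving DecidableEq

/-- An assignment maps each node and shape name to `some true` (the shape
literal `s` is assigned), `some false` (the literal `¬s` is assigned) or
`none` (neither); this representation guarantees that `s` and `¬s` are never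
assigned simultaneously. -/
abbrev Assignment := Node → SName → Option Bool

/-- SHACL constraints (abstract core syntax): the empty constraint, shape
references, equality with a constant, a graph atom (existence of a given
triple), existential quantification along a property, negation and
conjunction. -/
inductive Constraint
  | top
  | ref (s : SName)
  | eqc (c : Node)
  | hasTriple (p o : Node)
  | exPath (p : Node) (d : Constraint)
  | not (d : Constraint)
  | and (d₁ d₂ : Constraint)

open Classical in
/-- Three-valued (Kleene) evaluation `⟦d⟧^{G,σ}(n)` of a constraint at a node:
a shape reference `s(x)` is `True` if `s ∈ σ(x)`, `False` if `¬s ∈ σ(x)` and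
`Undefined` otherwise. -/
noncomputable def eval (G : Graph) (σ : Assignment) : Constraint → Node → K3
  | .top, _ => .t
  | .ref s, n =>
      match σ n s with
      | some true => .t
      | some false => .f
      | none => .u
  | .eqc c, n => if n = c then .t else .f
  | .hasTriple p o, n => if (n, p, o) ∈ G then .t else .f
  | .exPath p d, n =>
      if ∃ m, (n, p, m) ∈ G ∧ eval G σ d m = .t then .t
      else if ∀ m, (n, p, m) ∈ G → eval G σ d m = .f then .f
      else .u
  | .not d, n =>
      match eval G σ d n with
      | .t => .f
      | .f => .t
      | .u => .u
  | .and d₁ d₂, n =>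
      match eval G σ d₁ n, eval G σ d₂ n with
      | .f, _ => .f
      | _, .f => .f
      | .t, .t => .t
      | _, _ => .u

/-- A SHACL shape: a name, a target definition (a unary query over graphs)
and a constraint. -/
structure Shape where
  name : SName
  target : Graph → Set Node
  constraint : Constraint

/-- A SHACL document: a set of shapes. -/
abbrev Document := Set Shape

/-- `M̃`: the document `M` with every target definition replaced by the empty
target. -/
def minusTargets (M : Document) : Document :=
  (fun sh => { name := sh.name, target := fun _ => (∅ : Set Node),
               constraint := sh.constraint : Shape }) '' M

/-- Faithfulness of an assignment `σ` w.r.t. a graph `G` and a document `M`: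
(1) for every shape `⟨s,t,d⟩` of `M` and node `n`, `s ∈ σ(n)` iff
    `⟦d⟧^{G,σ}(n) = True` and `¬s ∈ σ(n)` iff `⟦d⟧^{G,σ}(n) = False`;
(2) every node targeted by `t` in `G` satisfies `s ∈ σ(n)`. -/
def Faithful (G : Graph) (σ : Assignment) (M : Document) : Prop :=
  (∀ sh ∈ M, ∀ n : Node,
      (σ n sh.name = some true ↔ eval G σ sh.constraint n = .t) ∧
      (σ n sh.name = some false ↔ eval G σ sh.constraint n = .f)) ∧
  (∀ sh ∈ M, ∀ n ∈ sh.target G, σ n sh.name = some true)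


/-- The fresh shape name `s⁺` associated with `s`. -/
def plus (s : SName) : SName := 2 * s

/-- The fresh shape name `s⁻` associated with `s`. -/
def minus (s : SName) : SName := 2 * s + 1

/-- The total assignment `σ^γ`:
`σ^γ(n) = {s⁺, ¬s⁻ | s ∈ σ(n)} ∪ {¬s⁺, s⁻ | ¬s ∈ σ(n)} ∪
          {¬s⁺, ¬s⁻ | s, ¬s ∉ σ(n)}`. -/
def gammaAssign (σ : Assignment) : Assignment := fun n s =>
  if s % 2 = 0 then some (decide (σ n (s / 2) = some true))
  else some (decide (σ n (s / 2) = some false))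

mutual
  /-- `γ(d)`: the translation of a constraint `d`; every non-negated
  shape-reference atom `s(x)` becomes `s⁺(x) ∧ ¬s⁻(x)` and every negated
  shape-reference atom `¬s(x)` becomes `¬s⁺(x) ∧ s⁻(x)`. -/
  def gammaPos : Constraint → Constraint
    | .ref s => .and (.ref (plus s)) (.not (.ref (minus s)))
    | .not d => gammaNeg d
    | .and d₁ d₂ => .and (gammaPos d₁) (gammaPos d₂)
    | .exPath p d => .exPath p (gammaPos d)
    | .top => .top
    | .eqc c => .eqc c
    | .hasTriple p o => .hasTriple p o

  /-- `γ(¬d)`: the translation of the negated form of a constraint `d`. -/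
  def gammaNeg : Constraint → Constraint
    | .ref s => .and (.not (.ref (plus s))) (.ref (minus s))
    | .not d => gammaPos d
    | .and d₁ d₂ => .not (.and (.not (gammaNeg d₁)) (.not (gammaNeg d₂)))
    | .exPath p d => .not (.exPath p (.not (gammaNeg d)))
    | .top => .not .top
    | .eqc c => .not (.eqc c)
    | .hasTriple p o => .not (.hasTriple p o)
end

lemma ne_u_cases (x : K3) (h : x ≠ .u) : x = .t ∨ x = .f := by
  cases x <;> simp_all

lemma gA_plus (σ : Assignment) (n : Node) (s : SName) :
    gammaAssign σ n (plus s) = some (decide (σ n s = some true)) := by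
  simp [gammaAssign, plus, Nat.mul_mod_right, Nat.mul_div_cancel_left]

lemma gA_minus (σ : Assignment) (n : Node) (s : SName) :
    gammaAssign σ n (minus s) = some (decide (σ n s = some false)) := by
  have h1 : (2 * s + 1) % 2 = 1 := by simp [Nat.mul_add_mod]
  have h2 : (2 * s + 1) / 2 = s := by simp [Nat.mul_add_div]
  simp [gammaAssign, minus, h1, h2]

lemma gamma_main (G : Graph) (σ : Assignment) (d : Constraint) : ∀ n : Node,
    (eval G σ d n = K3.t ↔ eval G (gammaAssign σ) (gammaPos d) n = K3.t) ∧
    (eval G σ d n = K3.f ↔ eval G (gammaAssign σ) (gammaNeg d) n = K3.t) ∧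
    eval G (gammaAssign σ) (gammaPos d) n ≠ K3.u ∧
    eval G (gammaAssign σ) (gammaNeg d) n ≠ K3.u := by
  induction d with
  | top =>
    intro n; simp [eval, gammaPos, gammaNeg]
  | ref s =>
    intro n
    cases h : σ n s with
    | none => simp [eval, gammaPos, gammaNeg, gA_plus, gA_minus, h]
    | some b => cases b <;> simp [eval, gammaPos, gammaNeg, gA_plus, gA_minus, h]
  | eqc c =>
    intro n
    by_cases h : n = c <;> simp [eval, gammaPos, gammaNeg, h]
  | hasTriple p o =>
    intro n
    by_cases h : (n, p, o) ∈ G <;> simp [eval, gammaPos, gammaNeg, h]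
  | not d ih =>
    intro n
    obtain ⟨h1, h2, h3, h4⟩ := ih n
    simp only [eval, gammaPos, gammaNeg] at *
    cases hx : eval G σ d n <;> simp_all
  | and d1 d2 ih1 ih2 =>
    intro n
    obtain ⟨a1, a2, a3, a4⟩ := ih1 n
    obtain ⟨b1, b2, b3, b4⟩ := ih2 n
    rcases ne_u_cases _ a3 with hp1 | hp1 <;>
    rcases ne_u_cases _ a4 with hn1 | hn1 <;>
    rcases ne_u_cases _ b3 with hp2 | hp2 <;>
    rcases ne_u_cases _ b4 with hn2 | hn2 <;>
    simp only [eval, gammaPos, gammaNeg] at * <;>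
    cases hx : eval G σ d1 n <;>
    cases hy : eval G σ d2 n <;>
      simp_all
  | exPath p d ih =>
    intro n
    have hnot_t : ∀ (c : Constraint) (m : Node),
        eval G (gammaAssign σ) (.not c) m = K3.t ↔
        eval G (gammaAssign σ) c m = K3.f := by
      intro c m; simp only [eval]
      cases eval G (gammaAssign σ) c m <;> simp
    have hnot_f : ∀ (c : Constraint) (m : Node),
        eval G (gammaAssign σ) (.not c) m = K3.f ↔
        eval G (gammaAssign σ) c m = K3.t := by
      intro c m; simp only [eval]
      cases eval G (gammaAssign σ) c m <;> simp
    have hnot_u : ∀ (c : Constraint) (m : Node),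
        eval G (gammaAssign σ) (.not c) m = K3.u ↔
        eval G (gammaAssign σ) c m = K3.u := by
      intro c m; simp only [eval]
      cases eval G (gammaAssign σ) c m <;> simp
    have keyT : ∀ m, eval G (gammaAssign σ) (gammaPos d) m = K3.t ↔
        eval G σ d m = K3.t := fun m => ((ih m).1).symm
    have keyF : ∀ m, eval G (gammaAssign σ) (gammaPos d) m = K3.f ↔
        ¬ eval G σ d m = K3.t := by
      intro m
      rw [show (¬ eval G σ d m = K3.t) = (¬ eval G (gammaAssign σ) (gammaPos d) m = K3.t)
            from by rw [keyT m]]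
      rcases ne_u_cases _ (ih m).2.2.1 with h | h <;> simp [h]
    have keyN : ∀ m, eval G (gammaAssign σ) (.not (gammaNeg d)) m = K3.t ↔
        ¬ eval G σ d m = K3.f := by
      intro m
      rw [hnot_t]
      rcases ne_u_cases _ (ih m).2.2.2 with h | h
      · have : eval G σ d m = K3.f := (ih m).2.1.mpr h
        simp [h, this]
      · simp [h]
        intro hc
        have := (ih m).2.1.mp hc
        simp [h] at this
    have keyNF : ∀ m, eval G (gammaAssign σ) (.not (gammaNeg d)) m = K3.f ↔
        eval G σ d m = K3.f := by
      intro m; rw [hnot_f]; exact ((ih m).2.1).symm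
    have keyNU : ∀ m, eval G (gammaAssign σ) (.not (gammaNeg d)) m ≠ K3.u := by
      intro m h; exact (ih m).2.2.2 ((hnot_u _ m).mp h)
    -- generic characterisations of eval on exPath
    have exT : ∀ (σ' : Assignment) (e : Constraint),
        eval G σ' (.exPath p e) n = K3.t ↔
        ∃ m, (n, p, m) ∈ G ∧ eval G σ' e m = K3.t := by
      intro σ' e; simp only [eval]; split_ifs with h1 h2 <;> simp_all
    have exF : ∀ (σ' : Assignment) (e : Constraint),
        eval G σ' (.exPath p e) n = K3.f ↔
        ((¬ ∃ m, (n, p, m) ∈ G ∧ eval G σ' e m = K3.t) ∧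
         ∀ m, (n, p, m) ∈ G → eval G σ' e m = K3.f) := by
      intro σ' e; simp only [eval]; split_ifs with h1 h2 <;> simp_all
    have exU : ∀ (σ' : Assignment) (e : Constraint),
        eval G σ' (.exPath p e) n = K3.u ↔
        ((¬ ∃ m, (n, p, m) ∈ G ∧ eval G σ' e m = K3.t) ∧
         ¬ ∀ m, (n, p, m) ∈ G → eval G σ' e m = K3.f) := by
      intro σ' e; simp only [eval]; split_ifs with h1 h2 <;> simp_all
    refine ⟨?_, ?_, ?_, ?_⟩
    · show _ ↔ eval G (gammaAssign σ) (.exPath p (gammaPos d)) n = K3.t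
      rw [exT, exT]
      exact exists_congr fun m => and_congr_right fun _ => (keyT m).symm
    · show _ ↔ eval G (gammaAssign σ)
        (.not (.exPath p (.not (gammaNeg d)))) n = K3.t
      rw [exF, hnot_t, exF]
      constructor
      · rintro ⟨-, hall⟩
        refine ⟨?_, fun m hm => (keyNF m).mpr (hall m hm)⟩
        rintro ⟨m, hm, hmt⟩
        exact (keyN m).mp hmt (hall m hm)
      · rintro ⟨-, hall⟩
        have hall' : ∀ m, (n, p, m) ∈ G → eval G σ d m = K3.f :=
          fun m hm => (keyNF m).mp (hall m hm)
        refine ⟨?_, hall'⟩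
        rintro ⟨m, hm, hmt⟩
        have := hall' m hm
        rw [hmt] at this
        exact K3.noConfusion this
    · show eval G (gammaAssign σ) (.exPath p (gammaPos d)) n ≠ K3.u
      intro h
      rw [exU] at h
      obtain ⟨hne, hnall⟩ := h
      apply hnall
      intro m hm
      rcases ne_u_cases _ (ih m).2.2.1 with h | h
      · exact absurd ⟨m, hm, h⟩ hne
      · exact h
    · show eval G (gammaAssign σ)
        (.not (.exPath p (.not (gammaNeg d)))) n ≠ K3.u
      intro h
      rw [hnot_u, exU] at h
      obtain ⟨hne, hnall⟩ := h
      apply hnall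
      intro m hm
      rcases ne_u_cases _ (keyNU m) with h | h
      · exact absurd ⟨m, hm, h⟩ hne
      · exact h

/-- Lemma on the γ transformation: given a SHACL document
`M`, a graph `G`, an assignment `σ` and a node `n`, for every constraint `d`
occurring in `M`:
(i)   `⟦d⟧^{G,σ}(n) = True`  iff `⟦γ(d)⟧^{G,σ^γ}(n) = True`;
(ii)  `⟦d⟧^{G,σ}(n) = False` iff `⟦γ(¬d)⟧^{G,σ^γ}(n) = True`;
(iii) `⟦d⟧^{G,σ}(n) = Undefined` iff both `⟦γ(d)⟧^{G,σ^γ}(n)` and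
      `⟦γ(¬d)⟧^{G,σ^γ}(n)` are `False`. -/
theorem gamma_transformation_properties
    (M : Document) (G : Graph) (σ : Assignment) (n : Node)
    (d : Constraint) (hd : ∃ sh ∈ M, sh.constraint = d) :
    (eval G σ d n = K3.t ↔ eval G (gammaAssign σ) (gammaPos d) n = K3.t) ∧
    (eval G σ d n = K3.f ↔ eval G (gammaAssign σ) (gammaNeg d) n = K3.t) ∧
    (eval G σ d n = K3.u ↔
      (eval G (gammaAssign σ) (gammaPos d) n = K3.f ∧
       eval G (gammaAssign σ) (gammaNeg d) n = K3.f)) := by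
  obtain ⟨h1, h2, h3, h4⟩ := gamma_main G σ d n
  refine ⟨h1, h2, ?_⟩
  rcases ne_u_cases _ h3 with hp | hp <;> rcases ne_u_cases _ h4 with hn | hn <;>
    cases hx : eval G σ d n <;> simp_all

end SHACL
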